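/- There exists a constant c > 0, depending only on n, with the following property. Let α > 0, K ≥ 1, 𝙺 ≥ 1, let D̂ be the open Euclidean ball of radius Kⁿ centered at 0 in ℝ^{n−1}, and for each k ∈ ℤⁿ_{*,K} let A_k be any n×n integer matrix with last row k and det A_k = 1. Then the Lebesgue measure of Ω² := ⋃_{k∈ℤⁿ_{*,K}} L_k(Z'_k) satisfies meas(Ω²) ≤ c α² K^{n²−n−1} 𝙺^{n+2}. -/

import Mathlib

open scoped Matrix

/-- Nonzero integer vectors whose first nonzero component is positive. -/
def ZSharp {n : ℕ} (k : Fin n → ℤ) : Prop :=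
  ∃ j, 0 < k j ∧ ∀ i, i < j → k i = 0

/-- Generators of one-dimensional maximal lattices: `ℤⁿ_*`. -/
def ZStar {n : ℕ} (k : Fin n → ℤ) : Prop :=
  ZSharp k ∧ Finset.univ.gcd k = 1

/-- The 1-norm `|k|₁ = ∑ |k_i|` of an integer vector. -/
def onormZ {n : ℕ} (k : Fin n → ℤ) : ℤ := ∑ i, |k i|

/-- Euclidean norm on `Fin n → ℝ`. -/
noncomputable def enorm' {n : ℕ} (y : Fin n → ℝ) : ℝ := Real.sqrt (∑ i, y i ^ 2)

/-- Euclidean dot product on `Fin n → ℝ`. -/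
def edot {n : ℕ} (x y : Fin n → ℝ) : ℝ := ∑ i, x i * y i

/-- Orthogonal projection onto the hyperplane orthogonal to `k`. -/
noncomputable def eproj {n : ℕ} (k y : Fin n → ℝ) : Fin n → ℝ :=
  y - ((∑ i, k i ^ 2)⁻¹ * edot y k) • k

/-- The real vector associated with an integer vector. -/
def intR {n : ℕ} (k : Fin n → ℤ) : Fin n → ℝ := fun i => (k i : ℝ)

/-- `κ = ‖k‖²` for an integer vector `k`. -/
noncomputable def ksq {n : ℕ} (k : Fin n → ℤ) : ℝ := ∑ i, ((k i : ℝ)) ^ 2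

/-- `Â_k`: the first `n−1` rows of `A_k`, as a real matrix. -/
def AhatR {m : ℕ} (A : Matrix (Fin (m + 1)) (Fin (m + 1)) ℤ) :
    Matrix (Fin m) (Fin (m + 1)) ℝ :=
  Matrix.of fun i j => (A i.castSucc j : ℝ)

/-- The map `L_k : ℝⁿ → ℝⁿ`, `L_k(Ĵ, J_n) = J_n k + π_k^⊥(Â_kᵀ Ĵ)`. -/
noncomputable def LfullZ {m : ℕ} (k : Fin (m + 1) → ℤ)
    (A : Matrix (Fin (m + 1)) (Fin (m + 1)) ℤ) :
    (Fin (m + 1) → ℝ) → Fin (m + 1) → ℝ :=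
  fun J => J (Fin.last m) • intR k +
    eproj (intR k) ((AhatR A)ᵀ.mulVec fun i : Fin m => J i.castSucc)

/-- The set `Ẑ_k ⊆ D̂` (with `D̂` the ball of radius `Kⁿ` in `ℝ^{n−1}`). -/
noncomputable def ZhatSet {m : ℕ} (K KK α : ℝ) (k : Fin (m + 1) → ℤ)
    (A : Matrix (Fin (m + 1)) (Fin (m + 1)) ℤ) : Set (Fin m → ℝ) :=
  {Jh | enorm' Jh < K ^ (m + 1) ∧
    ∀ l : Fin (m + 1) → ℤ, ZStar l → (onormZ l : ℝ) ≤ KK → (¬∃ c : ℤ, l = c • k) →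
      3 * α * KK * enorm' (intR l) / enorm' (intR k) ≤
        |edot (eproj (intR k) ((AhatR A)ᵀ.mulVec Jh)) (intR l)|}

/-- The set `Z'_k = (D̂ \ Ẑ_k) × (−α/κ, α/κ) ⊆ ℝⁿ`. -/
noncomputable def ZprimeSet {m : ℕ} (K KK α : ℝ) (k : Fin (m + 1) → ℤ)
    (A : Matrix (Fin (m + 1)) (Fin (m + 1)) ℤ) : Set (Fin (m + 1) → ℝ) :=
  {J | enorm' (fun i : Fin m => J i.castSucc) < K ^ (m + 1) ∧
    (fun i : Fin m => J i.castSucc) ∉ ZhatSet K KK α k A ∧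
    |J (Fin.last m)| < α / ksq k}


open MeasureTheory

lemma enorm'_nonneg {n : ℕ} (y : Fin n → ℝ) : 0 ≤ enorm' y := Real.sqrt_nonneg _

lemma abs_le_enorm' {n : ℕ} (y : Fin n → ℝ) (i : Fin n) : |y i| ≤ enorm' y := by
  have h1 : y i ^ 2 ≤ ∑ j, y j ^ 2 :=
    Finset.single_le_sum (fun j _ => sq_nonneg (y j)) (Finset.mem_univ i)
  calc |y i| = Real.sqrt (y i ^ 2) := (Real.sqrt_sq_eq_abs _).symm
  _ ≤ _ := Real.sqrt_le_sqrt h1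

lemma enorm'_le_sum_abs {n : ℕ} (y : Fin n → ℝ) : enorm' y ≤ ∑ i, |y i| := by
  have h : ∑ i, y i ^ 2 ≤ (∑ i, |y i|) ^ 2 := by
    have := Finset.sum_sq_le_sq_sum_of_nonneg (s := Finset.univ)
      (f := fun i => |y i|) (fun i _ => abs_nonneg (y i))
    simpa [sq_abs] using this
  calc enorm' y ≤ Real.sqrt ((∑ i, |y i|) ^ 2) := Real.sqrt_le_sqrt h
  _ = ∑ i, |y i| := Real.sqrt_sq (Finset.sum_nonneg fun i _ => abs_nonneg _)

lemma sum_abs_le_sqrt_mul_enorm' {n : ℕ} (y : Fin n → ℝ) :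
    ∑ i, |y i| ≤ Real.sqrt n * enorm' y := by
  have h : (∑ i, |y i|) ^ 2 ≤ n * ∑ i, y i ^ 2 := by
    have := sq_sum_le_card_mul_sum_sq (s := (Finset.univ : Finset (Fin n)))
      (f := fun i => |y i|)
    simpa [sq_abs] using this
  have h0 : (0:ℝ) ≤ ∑ i, |y i| := Finset.sum_nonneg fun i _ => abs_nonneg _
  calc ∑ i, |y i| = Real.sqrt ((∑ i, |y i|) ^ 2) := (Real.sqrt_sq h0).symm
  _ ≤ Real.sqrt (n * ∑ i, y i ^ 2) := Real.sqrt_le_sqrt h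
  _ = Real.sqrt n * enorm' y := by
      rw [Real.sqrt_mul (by positivity)]; rfl

/-- slab volume bound -/
lemma slab_vol {m : ℕ} (v : Fin m → ℝ) (i₀ : Fin m) (hv : v i₀ ≠ 0) (ε R : ℝ) (hε : 0 ≤ ε) (hR : 0 ≤ R) :
    volume {x : Fin m → ℝ | (∀ i, |x i| ≤ R) ∧ |edot x v| < ε} ≤
      ENNReal.ofReal (|(v i₀)|⁻¹ * ((2*ε) * (2*R)^(m-1))) := by
  classical
  set M : Matrix (Fin m) (Fin m) ℝ := (1 : Matrix (Fin m) (Fin m) ℝ).updateRow i₀ v with hM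
  have hdet : M.det = v i₀ := by
    have hv' : v = ∑ j, v j • (1 : Matrix (Fin m) (Fin m) ℝ) j := by
      funext r
      simp [Matrix.one_apply, Finset.sum_ite_eq, Pi.smul_apply, smul_eq_mul]
    rw [hM, hv', Matrix.det_updateRow_sum]
    simp [Matrix.one_apply, mul_ite, Finset.sum_ite_eq']
  set f : (Fin m → ℝ) →ₗ[ℝ] (Fin m → ℝ) := Matrix.toLin' M with hf
  have hfdet : LinearMap.det f = v i₀ := by rw [hf, LinearMap.det_toLin', hdet]
  have hsub : {x : Fin m → ℝ | (∀ i, |x i| ≤ R) ∧ |edot x v| < ε} ⊆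
      f ⁻¹' (Set.pi Set.univ fun i => if i = i₀ then Set.Ioo (-ε) ε else Set.Icc (-R) R) := by
    intro x hx
    simp only [Set.mem_preimage, Set.mem_pi, Set.mem_univ, forall_true_left]
    intro i
    have hfx : f x i = M.mulVec x i := by rw [hf, Matrix.toLin'_apply]
    by_cases hi : i = i₀
    · subst hi
      simp only [if_pos rfl, Set.mem_Ioo]
      have hmv : M.mulVec x i = edot x v := by
        simp [hM, Matrix.mulVec, dotProduct, edot, mul_comm]
      rw [hfx, hmv]
      exact abs_lt.mp hx.2
    · simp only [if_neg hi, Set.mem_Icc]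
      have hmv : M.mulVec x i = x i := by
        simp [hM, Matrix.mulVec, dotProduct, Matrix.updateRow_apply, hi,
          Matrix.one_apply, Finset.sum_ite_eq]
      rw [hfx, hmv]
      exact abs_le.mp (hx.1 i)
  refine le_trans (measure_mono hsub) ?_
  rw [Measure.addHaar_preimage_linearMap volume (by rw [hfdet]; exact hv)]
  rw [hfdet, volume_pi_pi]
  have hprod : ∏ i, volume (if i = i₀ then Set.Ioo (-ε) ε else Set.Icc (-R) R)
      = volume (Set.Ioo (-ε) ε) * ∏ i ∈ Finset.univ.erase i₀, volume (Set.Icc (-R) R) := by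
    rw [← Finset.mul_prod_erase Finset.univ _ (Finset.mem_univ i₀)]
    simp only [if_pos rfl]
    congr 1
    exact Finset.prod_congr rfl fun i hi => by rw [if_neg (Finset.ne_of_mem_erase hi)]
  rw [hprod, Real.volume_Ioo, Real.volume_Icc, Finset.prod_const,
    Finset.card_erase_of_mem (Finset.mem_univ i₀), Finset.card_univ, Fintype.card_fin]
  have h2ε : ε - -ε = 2*ε := by ring
  have h2R : R - -R = 2*R := by ring
  rw [h2ε, h2R, ← ENNReal.ofReal_pow (by positivity),
    ← ENNReal.ofReal_mul (by positivity), ← ENNReal.ofReal_mul (abs_nonneg _), abs_inv]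

noncomputable def Bmat {m : ℕ} (k : Fin (m + 1) → ℤ)
    (A : Matrix (Fin (m + 1)) (Fin (m + 1)) ℤ) : Matrix (Fin (m + 1)) (Fin (m + 1)) ℝ :=
  Matrix.of fun i j => Fin.lastCases ((k i : ℝ))
    (fun j' => (A j'.castSucc i : ℝ) -
      (ksq k)⁻¹ * (edot (fun r => (A j'.castSucc r : ℝ)) (intR k)) * (k i : ℝ)) j

lemma lfull_eq {m : ℕ} (k : Fin (m + 1) → ℤ) (A : Matrix (Fin (m + 1)) (Fin (m + 1)) ℤ) :
    LfullZ k A = (Bmat k A).mulVec := by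
  funext J i
  set Jh : Fin m → ℝ := fun j => J j.castSucc with hJh
  have hmv : ∀ r, ((AhatR A)ᵀ.mulVec Jh) r = ∑ j : Fin m, (A j.castSucc r : ℝ) * Jh j := by
    intro r
    simp [Matrix.mulVec, dotProduct, AhatR, mul_comm]
  have hswap : edot ((AhatR A)ᵀ.mulVec Jh) (intR k)
      = ∑ j : Fin m, (edot (fun r => (A j.castSucc r : ℝ)) (intR k)) * Jh j := by
    simp only [edot, hmv, Finset.sum_mul]
    rw [Finset.sum_comm]
    exact Finset.sum_congr rfl fun j _ =>
      Finset.sum_congr rfl fun r _ => by ring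
  have hL : LfullZ k A J i = J (Fin.last m) * (k i : ℝ) +
      ((∑ j : Fin m, (A j.castSucc i : ℝ) * Jh j) -
        (ksq k)⁻¹ * (∑ j : Fin m, (edot (fun r => (A j.castSucc r : ℝ)) (intR k)) * Jh j)
          * (k i : ℝ)) := by
    simp only [LfullZ, eproj, Pi.add_apply, Pi.sub_apply, Pi.smul_apply, smul_eq_mul, intR,
      ← hswap, hmv]
    rw [show (∑ r, ((k r : ℝ)) ^ 2) = ksq k from rfl]
    rw [← hJh, hmv]
  have hR : (Bmat k A).mulVec J i =
      (∑ j : Fin m, (A j.castSucc i : ℝ) * Jh j) -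
        (ksq k)⁻¹ * (∑ j : Fin m, (edot (fun r => (A j.castSucc r : ℝ)) (intR k)) * Jh j)
          * (k i : ℝ) + (k i : ℝ) * J (Fin.last m) := by
    rw [show (Bmat k A).mulVec J i = ∑ j, Bmat k A i j * J j from rfl, Fin.sum_univ_castSucc]
    simp only [Bmat, Matrix.of_apply, Fin.lastCases_castSucc, Fin.lastCases_last, sub_mul]
    rw [Finset.sum_sub_distrib]
    congr 1
    congr 1
    rw [Finset.mul_sum, Finset.sum_mul]
    exact Finset.sum_congr rfl fun j _ => by ring
  rw [hL, hR]
  ring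

lemma Bmat_det {m : ℕ} (k : Fin (m + 1) → ℤ) (A : Matrix (Fin (m + 1)) (Fin (m + 1)) ℤ)
    (hrow : ∀ j, A (Fin.last m) j = k j) : (Bmat k A).det = (A.det : ℝ) := by
  classical
  set c : Fin (m + 1) → ℝ := fun j => Fin.lastCases 0
    (fun j' => -((ksq k)⁻¹ * edot (fun r => (A j'.castSucc r : ℝ)) (intR k))) j with hc
  set F : Matrix (Fin (m + 1)) (Fin (m + 1)) ℝ :=
    Matrix.of fun i j => if i = Fin.last m then c j else 0 with hF
  set T : Matrix (Fin (m + 1)) (Fin (m + 1)) ℝ := (A.map (Int.cast : ℤ → ℝ))ᵀ with hT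
  have hB : Bmat k A = T * (1 + F) := by
    ext i j
    have he : (T * (1 + F)) i j = T i j + (k i : ℝ) * c j := by
      rw [Matrix.mul_add, Matrix.mul_one, Matrix.add_apply]
      congr 1
      rw [Matrix.mul_apply]
      rw [Finset.sum_eq_single (Fin.last m)]
      · simp [hF, hT, Matrix.transpose_apply, hrow i]
      · intro b _ hb
        simp [hF, hb]
      · simp
    rw [he]
    refine Fin.lastCases ?_ (fun j' => ?_) j
    · simp [Bmat, hc, hT, hrow]
    · simp only [Bmat, Matrix.of_apply, Fin.lastCases_castSucc, hc, hT,
        Matrix.transpose_apply, Matrix.map_apply]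
      ring
  have hdetF : (1 + F).det = 1 := by
    have htri : (1 + F).BlockTriangular OrderDual.toDual := by
      intro i j hij
      have hij' : i < j := hij
      have hine : i ≠ Fin.last m := by
        intro h
        exact absurd (h ▸ hij') (by simp [Fin.le_last, not_lt.mpr (Fin.le_last j)])
      simp [hF, Matrix.one_apply, hine, Fin.ne_of_lt hij']
    rw [Matrix.det_of_lowerTriangular _ htri]
    apply Finset.prod_eq_one
    intro i _
    by_cases h : i = Fin.last m
    · subst h; simp [hF, hc, Matrix.one_apply]
    · simp [hF, h, Matrix.one_apply]
  have hdetT : T.det = (A.det : ℝ) := by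
    rw [hT, Matrix.det_transpose]
    have := RingHom.map_det (Int.castRingHom ℝ) A
    rw [RingHom.mapMatrix_apply] at this
    simpa using this.symm
  rw [hB, Matrix.det_mul, hdetF, hdetT, mul_one]

lemma lfull_image_vol {m : ℕ} (k : Fin (m + 1) → ℤ) (A : Matrix (Fin (m + 1)) (Fin (m + 1)) ℤ)
    (hrow : ∀ j, A (Fin.last m) j = k j) (hdet : A.det = 1) (s : Set (Fin (m + 1) → ℝ)) :
    volume (LfullZ k A '' s) = volume s := by
  rw [lfull_eq]
  have h : (Bmat k A).mulVec = ⇑(Matrix.toLin' (Bmat k A)) := by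
    funext J; rw [Matrix.toLin'_apply]
  rw [h, Measure.addHaar_image_linearMap, LinearMap.det_toLin', Bmat_det k A hrow, hdet]
  simp

lemma edot_comm {n : ℕ} (x y : Fin n → ℝ) : edot x y = edot y x := by
  simp [edot, mul_comm]

lemma eproj_edot_comm {n : ℕ} (k y l : Fin n → ℝ) :
    edot (eproj k y) l = edot y (eproj k l) := by
  have he : ∀ a b : Fin n → ℝ, edot a b = dotProduct a b := fun _ _ => rfl
  simp only [eproj, he]
  rw [sub_dotProduct, dotProduct_sub, smul_dotProduct,
    dotProduct_smul, smul_eq_mul, smul_eq_mul, dotProduct_comm k l,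
    dotProduct_comm y k]
  ring

lemma transpose_mulVec_edot {m : ℕ} (A : Matrix (Fin m) (Fin (m + 1)) ℝ)
    (x : Fin m → ℝ) (w : Fin (m + 1) → ℝ) :
    edot (Aᵀ.mulVec x) w = edot x (A.mulVec w) := by
  simp only [edot, Matrix.mulVec, dotProduct, Matrix.transpose_apply,
    Finset.sum_mul, Finset.mul_sum]
  rw [Finset.sum_comm]
  exact Finset.sum_congr rfl fun i _ => Finset.sum_congr rfl fun j _ => by ring

lemma exists_big_coord {m : ℕ} (k l : Fin (m + 1) → ℤ)
    (A : Matrix (Fin (m + 1)) (Fin (m + 1)) ℤ)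
    (hrow : ∀ j, A (Fin.last m) j = k j) (hdet : A.det = 1)
    (hkgcd : Finset.univ.gcd k = 1) (hknz : k ≠ 0) (hl : ¬∃ c : ℤ, l = c • k) :
    ∃ i₀ : Fin m, 1 ≤ |ksq k * ((AhatR A).mulVec (eproj (intR k) (intR l))) i₀| := by
  classical
  set kz : ℤ := ∑ j, (k j) ^ 2 with hkzdef
  have hkzcast : (kz : ℝ) = ksq k := by push_cast [hkzdef, ksq]; rfl
  have hkz1 : 1 ≤ kz := by
    obtain ⟨j, hj⟩ := Function.ne_iff.mp hknz
    calc (1 : ℤ) ≤ (k j) ^ 2 := by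
          have hne : k j ≠ 0 := by simpa using hj
          have h1 := Int.one_le_abs hne
          nlinarith [sq_abs (k j)]
    _ ≤ kz := Finset.single_le_sum (fun i _ => sq_nonneg (k i)) (Finset.mem_univ j)
  have hkzne : (kz : ℝ) ≠ 0 := by exact_mod_cast (by omega : kz ≠ 0)
  set S : ℤ := ∑ r, l r * k r with hSdef
  set u : Fin (m + 1) → ℤ := fun j => kz * l j - S * k j with hu
  have hscale : ∀ j, ksq k * (eproj (intR k) (intR l)) j = (u j : ℝ) := by
    intro j
    have hedot : edot (intR l) (intR k) = (S : ℝ) := by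
      push_cast [edot, intR, hSdef]; rfl
    have h1 : eproj (intR k) (intR l) j = (l j : ℝ) - (kz : ℝ)⁻¹ * (S : ℝ) * (k j : ℝ) := by
      simp only [eproj, Pi.sub_apply, Pi.smul_apply, smul_eq_mul]
      rw [hedot, show (∑ i, (intR k i) ^ 2) = (kz : ℝ) from by rw [hkzcast]; rfl]
      simp only [intR]
      try ring
    rw [h1, ← hkzcast, hu]
    push_cast
    field_simp
    try ring
  have hv : ∀ i : Fin m, ksq k * ((AhatR A).mulVec (eproj (intR k) (intR l))) i
      = ((∑ j, A i.castSucc j * u j : ℤ) : ℝ) := by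
    intro i
    rw [show ((AhatR A).mulVec (eproj (intR k) (intR l))) i
      = ∑ j, (A i.castSucc j : ℝ) * (eproj (intR k) (intR l)) j from rfl]
    rw [Finset.mul_sum]
    push_cast
    exact Finset.sum_congr rfl fun j _ => by rw [← hscale j]; ring
  by_contra hcon
  push_neg at hcon
  have hz : ∀ i : Fin m, (∑ j, A i.castSucc j * u j) = 0 := by
    intro i
    by_contra hne
    have h1 : (1 : ℤ) ≤ |∑ j, A i.castSucc j * u j| := Int.one_le_abs hne
    have := hcon i
    rw [hv i] at this
    have : (1 : ℝ) ≤ |((∑ j, A i.castSucc j * u j : ℤ) : ℝ)| := by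
      rw [← Int.cast_abs]; exact_mod_cast h1
    exact absurd (hv i ▸ (hcon i)) (not_lt.mpr this)
  have hlastz : (∑ j, A (Fin.last m) j * u j) = 0 := by
    simp only [hrow]
    have : ∑ j, k j * u j = kz * (∑ j, l j * k j) - S * kz := by
      simp only [hu, mul_sub, Finset.sum_sub_distrib]
      congr 1
      · rw [Finset.mul_sum]; exact Finset.sum_congr rfl fun j _ => by ring
      · rw [hkzdef, Finset.mul_sum]; exact Finset.sum_congr rfl fun j _ => by ring
    rw [this, ← hSdef]
    ring
  have hAu : A.mulVec u = 0 := by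
    funext i
    induction i using Fin.lastCases with
    | last => exact hlastz
    | cast i => exact hz i
  have huz : u = 0 := by
    have h1 : (A⁻¹ * A).mulVec u = A⁻¹.mulVec (A.mulVec u) := (Matrix.mulVec_mulVec u A⁻¹ A).symm
    rw [Matrix.nonsing_inv_mul A (by rw [hdet]; exact isUnit_one), Matrix.one_mulVec, hAu] at h1
    simpa using h1
  have hdvd : kz ∣ S := by
    have hdvd1 : ∀ j, kz ∣ S * k j := fun j => by
      have : kz * l j = S * k j := by
        have := congrFun huz j
        simp only [hu, Pi.zero_apply] at this
        linarith [this]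
      exact this ▸ Dvd.intro (l j) rfl
    have h2 : kz ∣ Finset.univ.gcd (fun j => S * k j) := Finset.dvd_gcd fun j _ => hdvd1 j
    rw [Finset.gcd_mul_left, hkgcd, mul_one] at h2
    exact (dvd_abs _ _).mp (by simpa using h2)
  obtain ⟨c, hc⟩ := hdvd
  apply hl
  refine ⟨c, funext fun j => ?_⟩
  have h3 : kz * l j = S * k j := by
    have := congrFun huz j
    simp only [hu, Pi.zero_apply] at this
    linarith [this]
  rw [hc] at h3
  have : kz * l j = kz * (c * k j) := by linarith [h3]
  have := mul_left_cancel₀ (show kz ≠ 0 by omega) this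
  simpa [Pi.smul_apply, smul_eq_mul] using this


lemma onorm_abs_le {n : ℕ} (k : Fin n → ℤ) (i : Fin n) : |k i| ≤ onormZ k :=
  Finset.single_le_sum (f := fun r => |k r|) (fun r _ => abs_nonneg _) (Finset.mem_univ i)

lemma onorm_cast {n : ℕ} (k : Fin n → ℤ) : ((onormZ k : ℝ)) = ∑ i, |intR k i| := by
  simp only [intR, onormZ]
  push_cast
  rfl

lemma enorm'_nonneg' {n : ℕ} (y : Fin n → ℝ) : 0 ≤ enorm' y := Real.sqrt_nonneg _

lemma one_le_onorm {n : ℕ} {k : Fin n → ℤ} (hk : ZStar k) : 1 ≤ onormZ k := by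
  obtain ⟨⟨j, hj, -⟩, -⟩ := hk
  calc (1:ℤ) ≤ |k j| := le_trans hj (le_abs_self _)
  _ ≤ onormZ k := Finset.single_le_sum (f := fun i => |k i|) (fun i _ => abs_nonneg _)
      (Finset.mem_univ j)

lemma sum_inv_enorm_le {m : ℕ} (hm : 1 ≤ m) (K : ℝ) (hK : 1 ≤ K)
    (Fk : Finset (Fin (m + 1) → ℤ))
    (hFk : ∀ k ∈ Fk, ZStar k ∧ (onormZ k : ℝ) ≤ K) :
    ∑ k ∈ Fk, (enorm' (intR k))⁻¹ ≤ 2 * 3 ^ m * Real.sqrt (m + 1) * K ^ m := by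
  classical
  set N : ℤ := ⌊K⌋ with hN
  have hN1 : 1 ≤ N := by rw [hN, Int.le_floor]; exact_mod_cast hK
  have hNK : (N : ℝ) ≤ K := Int.floor_le K
  have hmap : ∀ k ∈ Fk, onormZ k ∈ Finset.Icc 1 N := by
    intro k hk
    rw [Finset.mem_Icc]
    exact ⟨one_le_onorm (hFk k hk).1, by rw [hN, Int.le_floor]; exact (hFk k hk).2⟩
  rw [← Finset.sum_fiberwise_of_maps_to hmap]
  have hinner : ∀ j ∈ Finset.Icc (1:ℤ) N,
      (∑ k ∈ Fk.filter (fun k => onormZ k = j), (enorm' (intR k))⁻¹)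
        ≤ (2 * 3 ^ m * Real.sqrt (m + 1)) * (j : ℝ) ^ (m - 1) := by
    intro j hj
    rw [Finset.mem_Icc] at hj
    have hj1 : (1 : ℝ) ≤ (j : ℝ) := by exact_mod_cast hj.1
    have hjpos : (0 : ℝ) < (j : ℝ) := lt_of_lt_of_le one_pos hj1
    have hsq : (0:ℝ) < Real.sqrt (m + 1) := by positivity
    have hterm : ∀ k ∈ Fk.filter (fun k => onormZ k = j),
        (enorm' (intR k))⁻¹ ≤ Real.sqrt (m + 1) / (j : ℝ) := by
      intro k hk
      rw [Finset.mem_filter] at hk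
      have hnorm : (j : ℝ) ≤ Real.sqrt (m + 1) * enorm' (intR k) := by
        have h1 := sum_abs_le_sqrt_mul_enorm' (intR k)
        rw [← onorm_cast] at h1
        have hc : ((m : ℝ) + 1) = ((m + 1 : ℕ) : ℝ) := by push_cast; ring
        rw [← hk.2]
        rw [hc]
        exact h1
      have h2 : (j:ℝ) / Real.sqrt (m+1) ≤ enorm' (intR k) := by
        rw [div_le_iff₀ hsq]
        linarith [hnorm]
      have h3 : (enorm' (intR k))⁻¹ ≤ ((j:ℝ) / Real.sqrt (m+1))⁻¹ := by
        apply inv_anti₀ (by positivity) h2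
      rwa [inv_div] at h3
    refine le_trans (Finset.sum_le_card_nsmul _ _ _ hterm) ?_
    rw [nsmul_eq_mul]
    have hcard : (((Fk.filter (fun k => onormZ k = j)).card) : ℝ) ≤ 2 * (3 * (j:ℝ)) ^ m := by
      have hinj : (Fk.filter (fun k => onormZ k = j)).card ≤
          ((Fintype.piFinset fun _ : Fin m => Finset.Icc (-j) j) ×ˢ
            (Finset.univ : Finset Bool)).card := by
        apply Finset.card_le_card_of_injOn
          (fun k => (fun i : Fin m => k i.castSucc, decide (0 ≤ k (Fin.last m))))
        · intro k hk
          rw [Finset.mem_coe, Finset.mem_filter] at hk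
          rw [Finset.mem_coe, Finset.mem_product]
          refine ⟨?_, Finset.mem_univ _⟩
          rw [Fintype.mem_piFinset]
          intro i
          rw [Finset.mem_Icc]
          have habs : |k i.castSucc| ≤ onormZ k := Finset.single_le_sum
            (f := fun r => |k r|) (fun r _ => abs_nonneg _) (Finset.mem_univ _)
          rw [hk.2] at habs
          exact abs_le.mp habs
        · intro k hk k' hk' heq
          simp only [Finset.coe_filter, Set.mem_setOf_eq] at hk hk'
          obtain ⟨hfun, hbool⟩ := Prod.ext_iff.mp heq
          have hiff : (0 ≤ k (Fin.last m)) ↔ (0 ≤ k' (Fin.last m)) := by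
            constructor <;> intro h
            · by_contra h'
              have := hbool
              simp [h, h'] at this
            · by_contra h'
              have := hbool
              simp [h, h'] at this
          have hcs : ∀ i : Fin m, k i.castSucc = k' i.castSucc := fun i => congrFun hfun i
          have hsum : onormZ k = onormZ k' := by rw [hk.2, hk'.2]
          have habs : |k (Fin.last m)| = |k' (Fin.last m)| := by
            have e1 : onormZ k = (∑ i : Fin m, |k i.castSucc|) + |k (Fin.last m)| := by
              rw [onormZ, Fin.sum_univ_castSucc]
            have e2 : onormZ k' = (∑ i : Fin m, |k' i.castSucc|) + |k' (Fin.last m)| := by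
              rw [onormZ, Fin.sum_univ_castSucc]
            have e3 : (∑ i : Fin m, |k i.castSucc|) = ∑ i : Fin m, |k' i.castSucc| :=
              Finset.sum_congr rfl fun i _ => by rw [hcs i]
            rw [e1, e2, e3] at hsum
            omega
          have hlast : k (Fin.last m) = k' (Fin.last m) := by
            rcases abs_eq_abs.mp habs with h | h
            · exact h
            · rcases hiff with ⟨h1, h2⟩
              omega
          funext i
          induction i using Fin.lastCases with
          | last => exact hlast
          | cast i => exact hcs i
      have hc2 : (((Fintype.piFinset fun _ : Fin m => Finset.Icc (-j) j) ×ˢ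
          (Finset.univ : Finset Bool)).card : ℝ) ≤ 2 * (3 * (j:ℝ)) ^ m := by
        rw [Finset.card_product, Fintype.card_piFinset]
        simp only [Finset.prod_const, Finset.card_univ, Fintype.card_bool, Fintype.card_fin]
        have hicc : ((Finset.Icc (-j) j).card : ℝ) ≤ 3 * (j:ℝ) := by
          rw [Int.card_Icc]
          have h0 : (0:ℤ) ≤ j + 1 - -j := by omega
          rw [← Int.cast_natCast (R := ℝ), Int.toNat_of_nonneg h0]
          push_cast
          linarith
        calc ((((Finset.Icc (-j) j).card) ^ m * 2 : ℕ) : ℝ)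
            = (((Finset.Icc (-j) j).card : ℝ)) ^ m * 2 := by push_cast; ring
        _ ≤ (3 * (j:ℝ)) ^ m * 2 := by
            have := pow_le_pow_left₀ (by positivity) hicc m
            nlinarith [this]
        _ = 2 * (3 * (j:ℝ)) ^ m := by ring
      calc (((Fk.filter (fun k => onormZ k = j)).card) : ℝ) ≤ _ := by exact_mod_cast hinj
      _ ≤ 2 * (3 * (j:ℝ)) ^ m := hc2
    have hjm : (j:ℝ) ^ m = (j:ℝ) ^ (m - 1) * (j:ℝ) := by
      conv_lhs => rw [show m = (m-1)+1 from (Nat.succ_pred_eq_of_pos hm).symm]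
      rw [pow_succ]
    calc (((Fk.filter (fun k => onormZ k = j)).card) : ℝ) * (Real.sqrt (m+1) / (j:ℝ))
        ≤ (2 * (3 * (j:ℝ)) ^ m) * (Real.sqrt (m+1) / (j:ℝ)) := by
          apply mul_le_mul_of_nonneg_right hcard (by positivity)
    _ = (2 * 3 ^ m * Real.sqrt (m + 1)) * (j : ℝ) ^ (m - 1) := by
        rw [mul_pow, hjm]
        field_simp
  refine le_trans (Finset.sum_le_sum hinner) ?_
  rw [← Finset.mul_sum]
  have houter : ∑ j ∈ Finset.Icc (1:ℤ) N, ((j:ℝ)) ^ (m - 1) ≤ K ^ m := by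
    have hbnd : ∀ j ∈ Finset.Icc (1:ℤ) N, ((j:ℝ)) ^ (m-1) ≤ (N:ℝ) ^ (m-1) := by
      intro j hj
      rw [Finset.mem_Icc] at hj
      have h1 : (0:ℝ) ≤ (j:ℝ) := by exact_mod_cast (by omega : (0:ℤ) ≤ j)
      exact pow_le_pow_left₀ h1 (by exact_mod_cast hj.2) _
    refine le_trans (Finset.sum_le_card_nsmul _ _ _ hbnd) ?_
    rw [nsmul_eq_mul, Int.card_Icc]
    have h0 : (0:ℤ) ≤ N + 1 - 1 := by omega
    have hNr : (((N + 1 - 1).toNat : ℕ) : ℝ) = (N:ℝ) := by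
      have h1 : N + 1 - 1 = N := by ring
      rw [h1, ← Int.cast_natCast (R := ℝ), Int.toNat_of_nonneg (by omega : (0:ℤ) ≤ N)]
    rw [hNr]
    have hNpos : (0:ℝ) ≤ (N:ℝ) := by exact_mod_cast (by omega : (0:ℤ) ≤ N)
    calc (N:ℝ) * (N:ℝ)^(m-1) = (N:ℝ)^m := by
          conv_rhs => rw [show m = (m-1)+1 from (Nat.succ_pred_eq_of_pos hm).symm]
          rw [pow_succ]
          ring
    _ ≤ K ^ m := pow_le_pow_left₀ hNpos hNK m
  calc 2 * 3^m * Real.sqrt (m+1) * ∑ j ∈ Finset.Icc (1:ℤ) N, ((j:ℝ)) ^ (m - 1)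
      ≤ 2 * 3^m * Real.sqrt (m+1) * K ^ m := by
        apply mul_le_mul_of_nonneg_left houter (by positivity)


lemma zstar_ne_zero {n : ℕ} {k : Fin n → ℤ} (hk : ZStar k) : k ≠ 0 := by
  obtain ⟨⟨j, hj, -⟩, -⟩ := hk
  intro h
  rw [h] at hj
  simp at hj

lemma one_le_ksq {n : ℕ} {k : Fin n → ℤ} (hk : k ≠ 0) : 1 ≤ ksq k := by
  obtain ⟨j, hj⟩ := Function.ne_iff.mp hk
  have hj' : k j ≠ 0 := by simpa using hj
  have h1 : (1:ℝ) ≤ ((k j : ℝ)) ^ 2 := by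
    have := Int.one_le_abs hj'
    have h2 : (1:ℝ) ≤ |(k j : ℝ)| := by exact_mod_cast (by push_cast [← Int.cast_abs]; exact_mod_cast this : (1:ℝ) ≤ ((|k j| : ℤ) : ℝ))
    nlinarith [sq_abs ((k j : ℝ))]
  calc (1:ℝ) ≤ ((k j : ℝ)) ^ 2 := h1
  _ ≤ ksq k := Finset.single_le_sum (f := fun i => ((k i:ℝ))^2) (fun i _ => sq_nonneg _) (Finset.mem_univ j)

lemma enorm_intR_eq_sqrt {n : ℕ} (k : Fin n → ℤ) : enorm' (intR k) = Real.sqrt (ksq k) := rfl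

lemma enorm'_intR_le_onorm {n : ℕ} (k : Fin n → ℤ) : enorm' (intR k) ≤ (onormZ k : ℝ) := by
  rw [onorm_cast]
  exact enorm'_le_sum_abs (intR k)

lemma pair_eq {m : ℕ} (k l : Fin (m + 1) → ℤ) (A : Matrix (Fin (m + 1)) (Fin (m + 1)) ℤ)
    (Jh : Fin m → ℝ) :
    edot (eproj (intR k) ((AhatR A)ᵀ.mulVec Jh)) (intR l)
      = edot Jh ((AhatR A).mulVec (eproj (intR k) (intR l))) := by
  rw [eproj_edot_comm, transpose_mulVec_edot]

lemma measurable_enorm' {n : ℕ} : Measurable (fun y : Fin n → ℝ => enorm' y) := by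
  apply Real.continuous_sqrt.measurable.comp
  exact Finset.measurable_sum _ fun i _ => (measurable_pi_apply i).pow_const 2

lemma measurable_edot_right {n : ℕ} (v : Fin n → ℝ) :
    Measurable (fun x : Fin n → ℝ => edot x v) :=
  Finset.measurable_sum _ fun i _ => (measurable_pi_apply i).mul_const _

lemma measurableSet_ZhatSet {m : ℕ} (K KK α : ℝ) (k : Fin (m + 1) → ℤ)
    (A : Matrix (Fin (m + 1)) (Fin (m + 1)) ℤ) :
    MeasurableSet (ZhatSet K KK α k A) := by
  have h : ZhatSet K KK α k A =
      {Jh : Fin m → ℝ | enorm' Jh < K ^ (m + 1)} ∩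
      ⋂ (l : Fin (m + 1) → ℤ) (_ : ZStar l) (_ : (onormZ l : ℝ) ≤ KK)
          (_ : ¬∃ c : ℤ, l = c • k),
        {Jh : Fin m → ℝ | 3 * α * KK * enorm' (intR l) / enorm' (intR k) ≤
          |edot (eproj (intR k) ((AhatR A)ᵀ.mulVec Jh)) (intR l)|} := by
    ext Jh
    simp only [ZhatSet, Set.mem_setOf_eq, Set.mem_inter_iff, Set.mem_iInter]
  rw [h]
  refine (measurableSet_lt measurable_enorm' measurable_const).inter ?_
  refine MeasurableSet.iInter fun l => MeasurableSet.iInter fun _ =>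
    MeasurableSet.iInter fun _ => MeasurableSet.iInter fun _ => ?_
  refine measurableSet_le measurable_const ?_
  have h2 : (fun Jh : Fin m → ℝ => |edot (eproj (intR k) ((AhatR A)ᵀ.mulVec Jh)) (intR l)|)
      = fun Jh => |edot Jh ((AhatR A).mulVec (eproj (intR k) (intR l)))| := by
    funext Jh
    rw [pair_eq]
  rw [h2]
  exact (measurable_edot_right _).abs

lemma zprime_vol {m : ℕ} (K KK α : ℝ) (k : Fin (m + 1) → ℤ)
    (A : Matrix (Fin (m + 1)) (Fin (m + 1)) ℤ) :
    volume (ZprimeSet K KK α k A)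
      = ENNReal.ofReal (2 * (α / ksq k)) *
        volume ({Jh : Fin m → ℝ | enorm' Jh < K ^ (m + 1)} \ ZhatSet K KK α k A) := by
  classical
  set D := {Jh : Fin m → ℝ | enorm' Jh < K ^ (m + 1)} \ ZhatSet K KK α k A with hD
  have hDm : MeasurableSet D :=
    (measurableSet_lt measurable_enorm' measurable_const).diff (measurableSet_ZhatSet K KK α k A)
  set e := MeasurableEquiv.piFinSuccAbove (fun _ : Fin (m + 1) => ℝ) (Fin.last m) with he
  have hpre : ZprimeSet K KK α k A
      = e ⁻¹' ((Set.Ioo (-(α / ksq k)) (α / ksq k)) ×ˢ D) := by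
    ext J
    have happ : e J = (J (Fin.last m), fun j : Fin m => J ((Fin.last m).succAbove j)) := rfl
    simp only [Set.mem_preimage, happ, Set.mem_prod, Set.mem_Ioo, hD, Set.mem_diff,
      Set.mem_setOf_eq, ZprimeSet, Fin.succAbove_last]
    constructor
    · rintro ⟨h1, h2, h3⟩
      exact ⟨abs_lt.mp h3, h1, h2⟩
    · rintro ⟨h3, h1, h2⟩
      exact ⟨h1, h2, abs_lt.mpr h3⟩
  rw [hpre,
    (volume_preserving_piFinSuccAbove (fun _ : Fin (m + 1) => ℝ) (Fin.last m)).measure_preimage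
      (measurableSet_Ioo.prod hDm).nullMeasurableSet]
  rw [Measure.volume_eq_prod, Measure.prod_prod, Real.volume_Ioo,
    show α / ksq k - -(α / ksq k) = 2 * (α / ksq k) from by ring]


lemma perk_bound {m : ℕ} (α K KK : ℝ) (hα : 0 < α) (hK : 1 ≤ K) (hKK : 1 ≤ KK)
    (k : Fin (m + 1) → ℤ) (A : Matrix (Fin (m + 1)) (Fin (m + 1)) ℤ)
    (hks : ZStar k)
    (hrow : ∀ j, A (Fin.last m) j = k j) (hdet : A.det = 1) :
    volume (LfullZ k A '' ZprimeSet K KK α k A) ≤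
      ENNReal.ofReal (12 * (5 * KK) ^ (m + 1) * α ^ 2 * KK ^ 2 * (2 * K ^ (m + 1)) ^ (m - 1)
        * (enorm' (intR k))⁻¹) := by
  classical
  have hgcd : Finset.univ.gcd k = 1 := hks.2
  have hknz : k ≠ 0 := zstar_ne_zero hks
  have hκ1 : (1:ℝ) ≤ ksq k := one_le_ksq hknz
  have hκpos : (0:ℝ) < ksq k := lt_of_lt_of_le one_pos hκ1
  have hnkpos : 0 < enorm' (intR k) := by
    rw [enorm_intR_eq_sqrt]
    positivity
  have hR0 : (0:ℝ) ≤ K ^ (m + 1) := by positivity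
  rw [lfull_image_vol k A hrow hdet, zprime_vol]
  set NK : ℤ := ⌈KK⌉ with hNK
  have hKKNK : KK ≤ (NK : ℝ) := Int.le_ceil KK
  have hNK1 : 1 ≤ NK := by exact_mod_cast le_trans hKK hKKNK
  have hNKKK : (NK : ℝ) < KK + 1 := Int.ceil_lt_add_one KK
  set Fl : Finset (Fin (m + 1) → ℤ) :=
    (Fintype.piFinset fun _ : Fin (m + 1) => Finset.Icc (-NK) NK).filter
      (fun l => ZStar l ∧ (onormZ l : ℝ) ≤ KK ∧ ¬∃ c : ℤ, l = c • k) with hFl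
  set Slab : (Fin (m + 1) → ℤ) → Set (Fin m → ℝ) := fun l =>
      {x | (∀ i, |x i| ≤ K ^ (m + 1)) ∧
        |edot x ((AhatR A).mulVec (eproj (intR k) (intR l)))| <
          3 * α * KK * enorm' (intR l) / enorm' (intR k)} with hSlab
  have hsub : {Jh : Fin m → ℝ | enorm' Jh < K ^ (m + 1)} \ ZhatSet K KK α k A
      ⊆ ⋃ l ∈ Fl, Slab l := by
    intro Jh hJh
    obtain ⟨h1, h2⟩ := hJh
    rw [Set.mem_setOf_eq] at h1
    have h3 : ¬ ∀ l : Fin (m + 1) → ℤ, ZStar l → (onormZ l : ℝ) ≤ KK →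
        (¬∃ c : ℤ, l = c • k) →
        3 * α * KK * enorm' (intR l) / enorm' (intR k) ≤
          |edot (eproj (intR k) ((AhatR A)ᵀ.mulVec Jh)) (intR l)| := by
      intro hall
      exact h2 ⟨h1, hall⟩
    push_neg at h3
    obtain ⟨l, hl1, hl2, hl3, hl4⟩ := h3
    refine Set.mem_biUnion (s := ↑Fl) (show l ∈ (Fl : Set (Fin (m+1) → ℤ)) from ?_)
      (show Jh ∈ Slab l from ?_)
    · rw [Finset.mem_coe, hFl, Finset.mem_filter]
      refine ⟨?_, hl1, hl2, not_exists.mpr hl3⟩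
      rw [Fintype.mem_piFinset]
      intro i
      rw [Finset.mem_Icc]
      have habs : |l i| ≤ onormZ l := onorm_abs_le l i
      have h5 : onormZ l ≤ NK := by
        have : ((onormZ l : ℝ)) ≤ (NK : ℝ) := le_trans hl2 hKKNK
        exact_mod_cast this
      exact abs_le.mp (habs.trans h5)
    · rw [hSlab]
      refine ⟨fun i => (abs_le_enorm' Jh i).trans h1.le, ?_⟩
      rw [← pair_eq]
      exact hl4
  have hvol_slab : ∀ l ∈ Fl, volume (Slab l) ≤
      ENNReal.ofReal (ksq k * (2 * (3 * α * KK * KK / enorm' (intR k)) *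
        (2 * K ^ (m + 1)) ^ (m - 1))) := by
    intro l hlFl
    rw [hFl, Finset.mem_filter] at hlFl
    obtain ⟨hbox, hl1, hl2, hl3⟩ := hlFl
    obtain ⟨i₀, hi₀⟩ := exists_big_coord k l A hrow hdet hgcd hknz hl3
    set v := (AhatR A).mulVec (eproj (intR k) (intR l)) with hv
    have h1v : 1 ≤ ksq k * |v i₀| := by
      rw [show ksq k * |v i₀| = |ksq k * v i₀| from by rw [abs_mul, abs_of_pos hκpos]]
      exact hi₀
    have hvne : v i₀ ≠ 0 := by
      intro h
      rw [h] at h1v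
      simp at h1v
      linarith
    have hεpos : 0 ≤ 3 * α * KK * enorm' (intR l) / enorm' (intR k) := by
      have := enorm'_nonneg (intR l)
      positivity
    refine le_trans (slab_vol v i₀ hvne _ (K ^ (m + 1)) hεpos hR0) ?_
    apply ENNReal.ofReal_le_ofReal
    have hinv : |v i₀|⁻¹ ≤ ksq k := by
      rw [inv_eq_one_div, div_le_iff₀ (abs_pos.mpr hvne)]
      linarith
    have hεle : 3 * α * KK * enorm' (intR l) / enorm' (intR k)
        ≤ 3 * α * KK * KK / enorm' (intR k) := by
      gcongr
      exact (enorm'_intR_le_onorm l).trans hl2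
    have h2ε : (2 * (3 * α * KK * enorm' (intR l) / enorm' (intR k))) *
        (2 * K ^ (m + 1)) ^ (m - 1)
        ≤ (2 * (3 * α * KK * KK / enorm' (intR k))) * (2 * K ^ (m + 1)) ^ (m - 1) := by
      gcongr
    exact mul_le_mul hinv h2ε (by positivity) (le_of_lt hκpos)
  have hcardFl : ((Fl.card : ℕ) : ℝ) ≤ (5 * KK) ^ (m + 1) := by
    have h1 : Fl.card ≤ ((2 * NK + 1).toNat) ^ (m + 1) := by
      refine le_trans (Finset.card_filter_le _ _) ?_
      rw [Fintype.card_piFinset]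
      apply le_of_eq
      simp only [Finset.prod_const, Finset.card_univ, Fintype.card_fin, Int.card_Icc]
      congr 1
      omega
    have h2 : (((2 * NK + 1).toNat : ℕ) : ℝ) ≤ 5 * KK := by
      rw [← Int.cast_natCast (R := ℝ), Int.toNat_of_nonneg (by omega : (0:ℤ) ≤ 2 * NK + 1)]
      push_cast
      nlinarith
    calc ((Fl.card : ℕ) : ℝ) ≤ ((((2 * NK + 1).toNat) ^ (m + 1) : ℕ) : ℝ) := by exact_mod_cast h1
    _ = (((2 * NK + 1).toNat : ℕ) : ℝ) ^ (m + 1) := by push_cast; ring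
    _ ≤ (5 * KK) ^ (m + 1) := by
        apply pow_le_pow_left₀ (by positivity) h2
  have hDvol : volume ({Jh : Fin m → ℝ | enorm' Jh < K ^ (m + 1)} \ ZhatSet K KK α k A)
      ≤ ENNReal.ofReal ((5 * KK) ^ (m + 1) * (ksq k *
        (2 * (3 * α * KK * KK / enorm' (intR k)) * (2 * K ^ (m + 1)) ^ (m - 1)))) := by
    refine le_trans (measure_mono hsub) ?_
    refine le_trans (measure_biUnion_finset_le Fl Slab) ?_
    refine le_trans (Finset.sum_le_card_nsmul Fl _ _ hvol_slab) ?_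
    rw [nsmul_eq_mul, ← ENNReal.ofReal_natCast, ← ENNReal.ofReal_mul (Nat.cast_nonneg _)]
    apply ENNReal.ofReal_le_ofReal
    apply mul_le_mul_of_nonneg_right hcardFl
    have := enorm'_nonneg (intR k)
    positivity
  calc ENNReal.ofReal (2 * (α / ksq k)) *
      volume ({Jh : Fin m → ℝ | enorm' Jh < K ^ (m + 1)} \ ZhatSet K KK α k A)
      ≤ ENNReal.ofReal (2 * (α / ksq k)) * ENNReal.ofReal ((5 * KK) ^ (m + 1) * (ksq k *
        (2 * (3 * α * KK * KK / enorm' (intR k)) * (2 * K ^ (m + 1)) ^ (m - 1)))) :=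
        mul_le_mul_right hDvol _
  _ = ENNReal.ofReal ((2 * (α / ksq k)) * ((5 * KK) ^ (m + 1) * (ksq k *
        (2 * (3 * α * KK * KK / enorm' (intR k)) * (2 * K ^ (m + 1)) ^ (m - 1))))) :=
        (ENNReal.ofReal_mul (by positivity)).symm
  _ = ENNReal.ofReal (12 * (5 * KK) ^ (m + 1) * α ^ 2 * KK ^ 2 * (2 * K ^ (m + 1)) ^ (m - 1)
        * (enorm' (intR k))⁻¹) := by
      congr 1
      have hκne : ksq k ≠ 0 := ne_of_gt hκpos
      have hnkne : enorm' (intR k) ≠ 0 := ne_of_gt hnkpos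
      field_simp
      ring

theorem stmt_8 (m : ℕ) (hm : 1 ≤ m) :
    ∃ c : ℝ, 0 < c ∧
      ∀ α K KK : ℝ, 0 < α → 1 ≤ K → 1 ≤ KK →
      ∀ A : (Fin (m + 1) → ℤ) → Matrix (Fin (m + 1)) (Fin (m + 1)) ℤ,
        (∀ k, ZStar k → (onormZ k : ℝ) ≤ K → ∀ j, A k (Fin.last m) j = k j) →
        (∀ k, ZStar k → (onormZ k : ℝ) ≤ K → (A k).det = 1) →
        MeasureTheory.volume
            (⋃ k ∈ {k : Fin (m + 1) → ℤ | ZStar k ∧ (onormZ k : ℝ) ≤ K},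
              LfullZ k (A k) '' ZprimeSet K KK α k (A k)) ≤
          ENNReal.ofReal
            (c * α ^ 2 * K ^ ((m + 1) ^ 2 - (m + 1) - 1) * KK ^ (m + 3)) := by
  classical
  refine ⟨12 * 5 ^ (m + 1) * 2 ^ (m - 1) * (2 * 3 ^ m * Real.sqrt (m + 1)), by positivity, ?_⟩
  intro α K KK hα hK hKK A hrowA hdetA
  set NKk : ℤ := ⌈K⌉ with hNKk
  have hKNKk : K ≤ (NKk : ℝ) := Int.le_ceil K
  set Fk : Finset (Fin (m + 1) → ℤ) :=
    (Fintype.piFinset fun _ : Fin (m + 1) => Finset.Icc (-NKk) NKk).filter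
      (fun k => ZStar k ∧ (onormZ k : ℝ) ≤ K) with hFk
  have hsub : (⋃ k ∈ {k : Fin (m + 1) → ℤ | ZStar k ∧ (onormZ k : ℝ) ≤ K},
        LfullZ k (A k) '' ZprimeSet K KK α k (A k))
      ⊆ ⋃ k ∈ Fk, LfullZ k (A k) '' ZprimeSet K KK α k (A k) := by
    refine Set.iUnion₂_subset fun k hk => ?_
    have hkFk : k ∈ Fk := by
      rw [hFk, Finset.mem_filter]
      refine ⟨?_, hk.1, hk.2⟩
      rw [Fintype.mem_piFinset]
      intro i
      rw [Finset.mem_Icc]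
      have habs : |k i| ≤ onormZ k := onorm_abs_le k i
      have h5 : onormZ k ≤ NKk := by
        have : ((onormZ k : ℝ)) ≤ (NKk : ℝ) := le_trans hk.2 hKNKk
        exact_mod_cast this
      exact abs_le.mp (habs.trans h5)
    exact Set.subset_biUnion_of_mem (u := fun k => LfullZ k (A k) '' ZprimeSet K KK α k (A k)) hkFk
  refine le_trans (measure_mono hsub) ?_
  refine le_trans (measure_biUnion_finset_le Fk _) ?_
  have hterm : ∀ k ∈ Fk, volume (LfullZ k (A k) '' ZprimeSet K KK α k (A k)) ≤
      ENNReal.ofReal (12 * (5 * KK) ^ (m + 1) * α ^ 2 * KK ^ 2 * (2 * K ^ (m + 1)) ^ (m - 1)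
        * (enorm' (intR k))⁻¹) := by
    intro k hk
    rw [hFk, Finset.mem_filter] at hk
    exact perk_bound α K KK hα hK hKK k (A k) hk.2.1
      (hrowA k hk.2.1 hk.2.2) (hdetA k hk.2.1 hk.2.2)
  refine le_trans (Finset.sum_le_sum hterm) ?_
  rw [← ENNReal.ofReal_sum_of_nonneg (fun k _ => by
    have h0 : 0 ≤ (enorm' (intR k))⁻¹ := inv_nonneg.mpr (enorm'_nonneg _)
    positivity)]
  apply ENNReal.ofReal_le_ofReal
  rw [← Finset.mul_sum]
  have hsum := sum_inv_enorm_le hm K hK Fk (fun k hk => (Finset.mem_filter.mp hk).2)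
  calc (12 * (5 * KK) ^ (m + 1) * α ^ 2 * KK ^ 2 * (2 * K ^ (m + 1)) ^ (m - 1)) *
        (∑ k ∈ Fk, (enorm' (intR k))⁻¹)
      ≤ (12 * (5 * KK) ^ (m + 1) * α ^ 2 * KK ^ 2 * (2 * K ^ (m + 1)) ^ (m - 1)) *
        (2 * 3 ^ m * Real.sqrt (m + 1) * K ^ m) := by
        apply mul_le_mul_of_nonneg_left hsum (by positivity)
  _ = 12 * 5 ^ (m + 1) * 2 ^ (m - 1) * (2 * 3 ^ m * Real.sqrt (m + 1)) * α ^ 2 *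
        K ^ ((m + 1) ^ 2 - (m + 1) - 1) * KK ^ (m + 3) := by
      obtain ⟨m', rfl⟩ : ∃ m', m = m' + 1 := ⟨m - 1, by omega⟩
      have he1 : (m' + 1 + 1) ^ 2 - (m' + 1 + 1) - 1 = (m' + 1 + 1) * (m' + 1 - 1) + (m' + 1) := by
        have h2 : (m' + 1 + 1) ^ 2 = (m' + 2) * (m' + 2) := by ring
        have h3 : (m' + 1 + 1) * (m' + 1 - 1) + (m' + 1) = m' * m' + 3 * m' + 1 := by
          simp only [Nat.add_sub_cancel]
          ring
        rw [h2, h3]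
        have h4 : (m' + 2) * (m' + 2) = (m' * m' + 3 * m' + 1) + 1 + (m' + 2) := by ring
        rw [h4]
        omega
      rw [he1, mul_pow, mul_pow, pow_add, ← pow_mul]
      rw [show (m' + 1) + 3 = ((m' + 1) + 1) + 2 from rfl, pow_add]
      ring
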